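/- Let κ be a regular uncountable cardinal, I a κ-complete normal ideal over κ, and δ a cardinal with δ⁺ < κ such that {α < κ : cf(α) = δ} ∉ I. Then there exist a stationary set E ⊆ {α < κ : cf(α) = ℵ₀} and an I-positive set X ⊆ {α < κ : cf(α) = δ} such that E ∩ α is non-stationary in α for every α ∈ X. -/

import Mathlib

open Cardinal Set

/-- The ordinal corresponding to an element of the canonical type `o.ToType` of
order type `o`. -/
noncomputable def ordAt {o : Ordinal} (x : o.ToType) : Ordinal :=
  ((Ordinal.ToType.mk (o := o)).symm x : Set.Iio o).1

/-- The cofinality of (the ordinal corresponding to) an element of `o.ToType`. -/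
noncomputable def cofAt {o : Ordinal} (a : o.ToType) : Cardinal := (ordAt a).cof

/-- Club subsets of (the canonical type of order type) `o`: unbounded sets
containing all of their limit points. -/
def OClub {o : Ordinal} (C : Set o.ToType) : Prop :=
  (∀ a, ∃ c ∈ C, a ≤ c) ∧
  ∀ a : o.ToType, (∃ c ∈ C, c < a) → (∀ b < a, ∃ c ∈ C, b < c ∧ c < a) → a ∈ C

/-- Stationary subsets of (the canonical type of order type) `o`. -/
def OStat {o : Ordinal} (S : Set o.ToType) : Prop :=
  ∀ C, OClub C → (S ∩ C).Nonempty

/-- `c` is a club subset of (the initial segment below) the element `a`. -/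
def ClubBelow {o : Ordinal} (c : Set o.ToType) (a : o.ToType) : Prop :=
  c ⊆ Set.Iio a ∧ (∀ b < a, ∃ x ∈ c, b ≤ x) ∧
  ∀ x < a, (∃ y ∈ c, y < x) → (∀ b < x, ∃ y ∈ c, b < y ∧ y < x) → x ∈ c

section
variable {o : Ordinal}
lemma ordAt_lt (x : o.ToType) : ordAt x < o :=
  (((Ordinal.ToType.mk (o := o))).symm x).2
lemma ordAt_lt_iff {x y : o.ToType} : ordAt x < ordAt y ↔ x < y := by
  rw [ordAt, ordAt, Subtype.coe_lt_coe, OrderIso.lt_iff_lt]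
lemma ordAt_le_iff {x y : o.ToType} : ordAt x ≤ ordAt y ↔ x ≤ y := by
  rw [ordAt, ordAt, Subtype.coe_le_coe, OrderIso.le_iff_le]
lemma ordAt_inj {x y : o.ToType} (h : ordAt x = ordAt y) : x = y :=
  le_antisymm (ordAt_le_iff.1 h.le) (ordAt_le_iff.1 h.ge)
lemma ordAt_surj {β : Ordinal} (h : β < o) : ∃ x : o.ToType, ordAt x = β := by
  refine ⟨(Ordinal.ToType.mk (o := o)) ⟨β, h⟩, ?_⟩
  rw [ordAt, OrderIso.symm_apply_apply]
end

section
universe u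
variable {κ : Cardinal.{u}}

lemma bound (hreg : κ.IsRegular) {ι : Type u} (hι : #ι < κ) (v : ι → κ.ord.ToType) :
    ∃ b : κ.ord.ToType, ∀ i, v i < b := by
  have h1 : (⨆ i, ordAt (v i)) < κ.ord := by
    apply Ordinal.iSup_lt_ord _ (fun i => ordAt_lt _)
    rwa [hreg.cof_eq]
  obtain ⟨b, hb⟩ := ordAt_surj ((Cardinal.isSuccLimit_ord hreg.aleph0_le).succ_lt h1)
  refine ⟨b, fun i => ?_⟩
  rw [← ordAt_lt_iff, hb]
  exact lt_of_le_of_lt (Ordinal.le_iSup _ i) (Order.lt_succ _)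

lemma exists_gt (hreg : κ.IsRegular) (hunc : ℵ₀ < κ) (a : κ.ord.ToType) : ∃ b, a < b := by
  obtain ⟨b, hb⟩ := bound hreg (ι := PUnit) (by simpa using one_lt_aleph0.trans hunc) (fun _ => a)
  exact ⟨b, hb PUnit.unit⟩

lemma supChain (hreg : κ.IsRegular) (hunc : ℵ₀ < κ) (g : ℕ → κ.ord.ToType) (hg : StrictMono g) :
    ∃ s, (∀ n, g n < s) ∧ (∀ y, y < s → ∃ n, y < g n) ∧ cofAt s = ℵ₀ := by
  set f : ULift.{u} ℕ → Ordinal := fun n => ordAt (g n.down) with hf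
  have hcard : #(ULift.{u} ℕ) = ℵ₀ := by simp
  have hsup : (⨆ n, f n) < κ.ord := by
    apply Ordinal.iSup_lt_ord _ (fun i => ordAt_lt _)
    rw [hcard, hreg.cof_eq]; exact hunc
  obtain ⟨s, hs⟩ := ordAt_surj hsup
  have hmem : ∀ i : ULift.{u} ℕ, f i < ⨆ n, f n :=
    fun i => lt_of_lt_of_le (ordAt_lt_iff.2 (hg (Nat.lt_succ_self i.down)))
      (Ordinal.le_iSup f ⟨i.down + 1⟩)
  have hlt : ∀ n, g n < s := by
    intro n
    rw [← ordAt_lt_iff, hs]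
    exact hmem ⟨n⟩
  refine ⟨s, hlt, fun y hy => ?_, ?_⟩
  · rw [← ordAt_lt_iff, hs, Ordinal.lt_iSup_iff] at hy
    obtain ⟨i, hi⟩ := hy
    exact ⟨i.down, ordAt_lt_iff.1 hi⟩
  · have hle : (ordAt s).cof ≤ ℵ₀ := by
      rw [hs, ← hcard]; exact Ordinal.cof_iSup_le hmem
    have hlim : Order.IsSuccLimit (ordAt s) := by
      rw [hs, Ordinal.isSuccLimit_iff, Order.isSuccPrelimit_iff_succ_lt]
      refine ⟨ne_of_gt (lt_of_le_of_lt zero_le (hmem ⟨0⟩)), fun a ha => ?_⟩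
      rw [Ordinal.lt_iSup_iff] at ha ⊢
      obtain ⟨i, hi⟩ := ha
      refine ⟨⟨i.down + 1⟩, lt_of_le_of_lt (Order.succ_le_of_lt hi) ?_⟩
      exact ordAt_lt_iff.2 (hg (Nat.lt_succ_self i.down))
    exact le_antisymm hle (Ordinal.aleph0_le_cof.2 hlim)

lemma O_nonempty (hunc : ℵ₀ < κ) : Nonempty κ.ord.ToType := by
  rw [Ordinal.nonempty_toType_iff]
  intro h
  have : (0:Cardinal) < κ := lt_trans aleph0_pos hunc
  rw [← Cardinal.ord_zero] at h
  exact absurd (Cardinal.ord_injective h) (by positivity)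

lemma iter_strictMono {α : Type*} [Preorder α] (next : α → α) (h : ∀ a, a < next a) (a₀ : α) :
    StrictMono (fun n => next^[n] a₀) := by
  apply strictMono_nat_of_lt_succ
  intro n
  rw [Function.iterate_succ_apply']
  exact h _

-- club from chain limits: if every point of every chain-step set lands in C "cofinally", s ∈ C
lemma mk_Iic_lt (hreg : κ.IsRegular) (x : κ.ord.ToType) : #(↥(Iic x)) < κ := by
  have hx : ordAt x + 1 < κ.ord := (Cardinal.isSuccLimit_ord hreg.aleph0_le).succ_lt (ordAt_lt x)
  have : #(↥(Iic x)) ≤ #((ordAt x + 1).ToType) := by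
    refine Cardinal.mk_le_of_injective (f := fun y =>
      (Ordinal.ToType.mk (o := ordAt x + 1)) ⟨ordAt y.1, ?_⟩) ?_
    · exact lt_of_le_of_lt (ordAt_le_iff.2 y.2) (Order.lt_succ _)
    · intro y z h
      have h2 := ((Ordinal.ToType.mk (o := ordAt x + 1))).injective h
      have h3 : ordAt y.1 = ordAt z.1 := Subtype.mk_eq_mk.mp h2
      exact Subtype.ext (ordAt_inj h3)
  rw [Cardinal.mk_toType] at this
  exact lt_of_le_of_lt this (Cardinal.lt_ord.1 hx)


lemma pickC (hreg : κ.IsRegular) (hunc : ℵ₀ < κ) {C : Set κ.ord.ToType} (hC : OClub C)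
    (x : κ.ord.ToType) : ∃ c ∈ C, x < c := by
  obtain ⟨b, hb⟩ := exists_gt hreg hunc x
  obtain ⟨c, hc, hbc⟩ := hC.1 b
  exact ⟨c, hc, lt_of_lt_of_le hb hbc⟩

lemma club_univ (hreg : κ.IsRegular) : OClub (univ : Set κ.ord.ToType) :=
  ⟨fun a => ⟨a, trivial, le_rfl⟩, fun _ _ _ => trivial⟩

lemma OStat.nonempty (hreg : κ.IsRegular) {S : Set κ.ord.ToType} (hS : OStat S) :
    S.Nonempty := by
  obtain ⟨a, ha, _⟩ := hS _ (club_univ hreg)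
  exact ⟨a, ha⟩

lemma club_Ioi (hreg : κ.IsRegular) (hunc : ℵ₀ < κ) (b : κ.ord.ToType) :
    OClub (Ioi b) := by
  constructor
  · intro a
    obtain ⟨c, hc⟩ := exists_gt hreg hunc (max a b)
    exact ⟨c, lt_of_le_of_lt (le_max_right a b) hc, le_of_lt (lt_of_le_of_lt (le_max_left a b) hc)⟩
  · rintro a ⟨c, hc, hca⟩ _
    exact lt_trans hc hca

lemma club_iInter (hreg : κ.IsRegular) (hunc : ℵ₀ < κ) {ι : Type u} (hι : #ι < κ)
    (C : ι → Set κ.ord.ToType) (hC : ∀ i, OClub (C i)) : OClub (⋂ i, C i) := by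
  choose p hpC hpx using fun (x : κ.ord.ToType) (i : ι) => pickC hreg hunc (hC i) x
  have hOpt : #(Option ι) < κ := by
    rw [Cardinal.mk_option]
    exact Cardinal.add_lt_of_lt hreg.aleph0_le hι (lt_trans one_lt_aleph0 hunc)
  have next : ∀ x : κ.ord.ToType, ∃ b, x < b ∧ ∀ i, p x i < b := by
    intro x
    obtain ⟨b, hb⟩ := bound hreg hOpt (fun oi => Option.elim oi x (p x))
    exact ⟨b, hb none, fun i => hb (some i)⟩
  choose nx hx1 hx2 using next
  constructor
  · intro a
    set g : ℕ → κ.ord.ToType := fun n => nx^[n] a with hgdef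
    have hg : StrictMono g := iter_strictMono nx hx1 a
    have hgs : ∀ n, g (n+1) = nx (g n) := fun n => Function.iterate_succ_apply' nx n a
    obtain ⟨s, hs1, hs2, _⟩ := supChain hreg hunc g hg
    refine ⟨s, ?_, le_of_lt (hs1 0)⟩
    rw [mem_iInter]
    intro i
    refine (hC i).2 s ⟨p (g 0) i, hpC _ _, ?_⟩ ?_
    · exact lt_trans (lt_of_lt_of_le (hx2 (g 0) i) (le_of_eq (hgs 0).symm)) (hs1 1)
    · intro b hb
      obtain ⟨n, hn⟩ := hs2 b hb
      refine ⟨p (g n) i, hpC _ _, lt_trans hn (hpx _ _), ?_⟩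
      exact lt_trans (lt_of_lt_of_le (hx2 (g n) i) (le_of_eq (hgs n).symm)) (hs1 (n+1))
  · intro a h1 h2
    rw [mem_iInter]
    intro i
    refine (hC i).2 a ?_ ?_
    · obtain ⟨c, hc, hca⟩ := h1
      exact ⟨c, (mem_iInter.1 hc) i, hca⟩
    · intro b hb
      obtain ⟨c, hc, hbc, hca⟩ := h2 b hb
      exact ⟨c, (mem_iInter.1 hc) i, hbc, hca⟩

lemma club_diag (hreg : κ.IsRegular) (hunc : ℵ₀ < κ) (C : κ.ord.ToType → Set κ.ord.ToType)
    (hC : ∀ b, OClub (C b)) :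
    OClub {a : κ.ord.ToType | ∀ b, b < a → a ∈ C b} := by
  choose p hpC hpx using fun (x b : κ.ord.ToType) => pickC hreg hunc (hC b) x
  have next : ∀ x : κ.ord.ToType, ∃ b, x < b ∧ ∀ y, y ≤ x → p x y < b := by
    intro x
    have hOpt : #(Option (↥(Iic x))) < κ := by
      rw [Cardinal.mk_option]
      exact Cardinal.add_lt_of_lt hreg.aleph0_le (mk_Iic_lt hreg x) (lt_trans one_lt_aleph0 hunc)
    obtain ⟨b, hb⟩ := bound hreg hOpt (fun oi => Option.elim oi x (fun y => p x y.1))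
    exact ⟨b, hb none, fun y hy => hb (some ⟨y, hy⟩)⟩
  choose nx hx1 hx2 using next
  constructor
  · intro a
    set g : ℕ → κ.ord.ToType := fun n => nx^[n] a with hgdef
    have hg : StrictMono g := iter_strictMono nx hx1 a
    have hgs : ∀ n, g (n+1) = nx (g n) := fun n => Function.iterate_succ_apply' nx n a
    obtain ⟨s, hs1, hs2, _⟩ := supChain hreg hunc g hg
    refine ⟨s, ?_, le_of_lt (hs1 0)⟩
    intro b hb
    obtain ⟨n, hn⟩ := hs2 b hb
    refine (hC b).2 s ⟨p (g n) b, hpC _ _, ?_⟩ ?_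
    · exact lt_trans (lt_of_lt_of_le (hx2 (g n) b hn.le) (le_of_eq (hgs n).symm)) (hs1 (n+1))
    · intro y hy
      obtain ⟨m, hm⟩ := hs2 y hy
      refine ⟨p (g (max n m)) b, hpC _ _, ?_, ?_⟩
      · exact lt_of_lt_of_le hm (le_trans (hg.monotone (le_max_right n m))
          (le_of_lt (hpx _ _)))
      · exact lt_trans (lt_of_lt_of_le (hx2 (g (max n m)) b
          (le_trans hn.le (hg.monotone (le_max_left n m)))) (le_of_eq (hgs (max n m)).symm))
          (hs1 (max n m + 1))
  · intro a h1 h2 b hb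
    refine (hC b).2 a ?_ ?_
    · obtain ⟨c, hc, hbc, hca⟩ := h2 b hb
      exact ⟨c, hc b hbc, hca⟩
    · intro y hy
      obtain ⟨c, hc, hyc, hca⟩ := h2 (max y b) (max_lt hy hb)
      exact ⟨c, hc b (lt_of_le_of_lt (le_max_right y b) hyc),
        lt_of_le_of_lt (le_max_left y b) hyc, hca⟩

lemma fodor (hreg : κ.IsRegular) (hunc : ℵ₀ < κ) {S : Set κ.ord.ToType} (hS : OStat S)
    (f : κ.ord.ToType → κ.ord.ToType) (hf : ∀ a ∈ S, f a < a) :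
    ∃ b, OStat {a ∈ S | f a = b} := by
  by_contra h
  push_neg at h
  have h' : ∀ b, ∃ Cb, OClub Cb ∧ {a ∈ S | f a = b} ∩ Cb = ∅ := by
    intro b
    have hb := h b
    rw [OStat] at hb; push_neg at hb
    obtain ⟨Cb, hc, hne⟩ := hb
    exact ⟨Cb, hc, hne⟩
  choose Cb hCb hCbe using h'
  obtain ⟨a, haS, haD⟩ := hS _ (club_diag hreg hunc Cb hCb)
  have h1 : a ∈ Cb (f a) := haD (f a) (hf a haS)
  have h2 : a ∈ {x ∈ S | f x = f a} ∩ Cb (f a) := ⟨⟨haS, rfl⟩, h1⟩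
  rw [hCbe] at h2; exact h2

lemma stat_cofOmega (hreg : κ.IsRegular) (hunc : ℵ₀ < κ) :
    OStat {a : κ.ord.ToType | cofAt a = ℵ₀} := by
  intro C hC
  have : Nonempty κ.ord.ToType := O_nonempty hunc
  choose p h1 h2 using fun x => pickC hreg hunc hC x
  set a₀ : κ.ord.ToType := Classical.arbitrary _ with ha₀
  set g : ℕ → κ.ord.ToType := fun n => p^[n] (p a₀) with hgdef
  have hg : StrictMono g := iter_strictMono p h2 (p a₀)
  have hgC : ∀ n, g n ∈ C := by
    intro n
    induction n with
    | zero => exact h1 a₀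
    | succ n ih =>
        have : g (n+1) = p (g n) := Function.iterate_succ_apply' p n (p a₀)
        rw [this]; exact h1 _
  obtain ⟨s, hs1, hs2, hs3⟩ := supChain hreg hunc g hg
  refine ⟨s, hs3, hC.2 s ⟨g 0, hgC 0, hs1 0⟩ ?_⟩
  intro b hb
  obtain ⟨n, hn⟩ := hs2 b hb
  exact ⟨g n, hgC n, hn, hs1 n⟩


lemma OStat.mono {S T : Set κ.ord.ToType} (h : S ⊆ T) (hS : OStat S) : OStat T := by
  intro C hC
  obtain ⟨a, h1, h2⟩ := hS C hC
  exact ⟨a, h h1, h2⟩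

lemma cof_seq (a : κ.ord.ToType) (ha : cofAt a = ℵ₀) :
    ∃ t : ℕ → κ.ord.ToType, (∀ n, t n < a) ∧ ∀ y, y < a → ∃ n, y ≤ t n := by
  obtain ⟨ι, F, hlsub, hcard⟩ := Ordinal.exists_lsub_cof (ordAt a)
  rw [cofAt] at ha
  rw [ha] at hcard
  have he : Nonempty (ULift.{u} ℕ ≃ ι) := by
    rw [← Cardinal.eq, hcard]; simp
  obtain ⟨e⟩ := he
  have hFlt : ∀ i, F i < ordAt a := by
    intro i; rw [← hlsub]; exact Ordinal.lt_lsub F i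
  have hsurj : ∀ n : ℕ, ∃ x : κ.ord.ToType, ordAt x = F (e ⟨n⟩) :=
    fun n => ordAt_surj (lt_trans (hFlt _) (ordAt_lt a))
  choose t htt using hsurj
  refine ⟨t, fun n => ?_, fun y hy => ?_⟩
  · rw [← ordAt_lt_iff, htt]; exact hFlt _
  · have : ordAt y < Ordinal.lsub F := by rw [hlsub]; exact ordAt_lt_iff.2 hy
    obtain ⟨i, hi⟩ := Ordinal.lt_lsub_iff.1 this
    refine ⟨(e.symm i).down, ?_⟩
    rw [← ordAt_le_iff, htt]
    have h4 : e { down := (e.symm i).down } = i := e.apply_symm_apply i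
    rw [h4]
    exact hi

lemma unbounded_card (hreg : κ.IsRegular) {U : Set κ.ord.ToType}
    (h : ∀ x, ∃ u ∈ U, x ≤ u) : κ ≤ #↥U := by
  by_contra hlt
  push_neg at hlt
  obtain ⟨b, hb⟩ := bound hreg hlt (fun u : ↥U => u.1)
  obtain ⟨u, hu, hbu⟩ := h b
  exact absurd (hb ⟨u, hu⟩) (not_lt.2 hbu)

lemma solovay (hreg : κ.IsRegular) (hunc : ℵ₀ < κ) (θ : Ordinal) (hθ : θ.card < κ) :
    ∃ E : θ.ToType → Set κ.ord.ToType,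
      (∀ ν, OStat (E ν)) ∧ (∀ ν, E ν ⊆ {a | cofAt a = ℵ₀}) ∧
      ∀ ν₁ ν₂ x, x ∈ E ν₁ → x ∈ E ν₂ → ν₁ = ν₂ := by
  classical
  have hseq : ∀ a : κ.ord.ToType, ∃ t : ℕ → κ.ord.ToType,
      cofAt a = ℵ₀ → (∀ n, t n < a) ∧ ∀ y, y < a → ∃ n, y ≤ t n := by
    intro a
    by_cases ha : cofAt a = ℵ₀
    · obtain ⟨t, h1, h2⟩ := cof_seq a ha
      exact ⟨t, fun _ => ⟨h1, h2⟩⟩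
    · exact ⟨fun _ => a, fun h => absurd h ha⟩
  choose t ht using hseq
  set A : Set κ.ord.ToType := {a | cofAt a = ℵ₀} with hA
  have key : ∃ n : ℕ, ∀ η, OStat {a ∈ A | η ≤ t a n} := by
    by_contra hk
    push_neg at hk
    have hk' : ∀ n : ℕ, ∃ η, ∃ C, OClub C ∧ {a ∈ A | η ≤ t a n} ∩ C = ∅ := by
      intro n
      obtain ⟨η, hη⟩ := hk n
      rw [OStat] at hη; push_neg at hη
      obtain ⟨C, hC1, hC2⟩ := hη
      exact ⟨η, C, hC1, hC2⟩
    choose η C hC hCe using hk'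
    obtain ⟨b, hb⟩ := bound hreg (ι := ULift.{u} ℕ)
      (by simpa using hunc) (fun n => η n.down)
    set D : Set κ.ord.ToType :=
      ⋂ oi : Option (ULift.{u} ℕ), Option.elim oi (Ioi b) (fun n => C n.down) with hD
    have hDclub : OClub D := by
      apply club_iInter hreg hunc
      · rw [Cardinal.mk_option]
        refine Cardinal.add_lt_of_lt hreg.aleph0_le (by simpa using hunc)
          (lt_trans one_lt_aleph0 hunc)
      · rintro (_ | n)
        · exact club_Ioi hreg hunc b
        · exact hC n.down
    obtain ⟨a, haA, haD⟩ := stat_cofOmega hreg hunc D hDclub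
    have hab : b < a := mem_iInter.1 haD none
    obtain ⟨n, hn⟩ := (ht a haA).2 b hab
    have haC : a ∈ C n := mem_iInter.1 haD (some ⟨n⟩)
    have : a ∈ {x ∈ A | η n ≤ t x n} ∩ C n :=
      ⟨⟨haA, le_trans (le_of_lt (hb ⟨n⟩)) hn⟩, haC⟩
    rw [hCe] at this
    exact this
  obtain ⟨n₀, hn₀⟩ := key
  set f : κ.ord.ToType → κ.ord.ToType := fun a => t a n₀ with hfdef
  have hVex : ∀ η, ∃ v, OStat {a ∈ {a ∈ A | η ≤ f a} | f a = v} := by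
    intro η
    exact fodor hreg hunc (hn₀ η) f (fun a ha => (ht a ha.1).1 n₀)
  choose V hV using hVex
  have hVge : ∀ η, η ≤ V η := by
    intro η
    obtain ⟨a, ha⟩ := (hV η).nonempty hreg
    exact le_of_le_of_eq ha.1.2 ha.2
  have hWcard : κ ≤ #↥(range V) := by
    apply unbounded_card hreg
    intro x
    exact ⟨V x, mem_range_self x, hVge x⟩
  have hemb : Nonempty (θ.ToType ↪ ↥(range V)) := by
    rw [← Cardinal.le_def]
    rw [Cardinal.mk_toType]
    exact le_trans (le_of_lt hθ) (le_trans hWcard (le_refl _))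
  obtain ⟨j⟩ := hemb
  refine ⟨fun ν => {a ∈ A | f a = (j ν).1}, ?_, ?_, ?_⟩
  · intro ν
    obtain ⟨η, hη⟩ := (j ν).2
    refine OStat.mono ?_ (hη ▸ hV η)
    intro a ha
    exact ⟨ha.1.1, ha.2⟩
  · exact fun ν a ha => ha.1
  · intro ν₁ ν₂ x h1 h2
    apply j.injective
    exact Subtype.ext (h1.2 ▸ h2.2 ▸ rfl)


lemma clubBelow_small (a : κ.ord.ToType) :
    ∃ c : Set κ.ord.ToType, ClubBelow c a ∧ #↥c ≤ cofAt a := by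
  classical
  obtain ⟨ι, F, hlsub, hcard⟩ := Ordinal.exists_lsub_cof (ordAt a)
  have hFlt : ∀ i, F i < ordAt a := fun i => hlsub ▸ Ordinal.lt_lsub F i
  choose u hu using fun i => ordAt_surj (lt_trans (hFlt i) (ordAt_lt a))
  have hua : ∀ i, u i < a := fun i => by rw [← ordAt_lt_iff, hu]; exact hFlt i
  have hunb : ∀ y, y < a → ∃ i, y ≤ u i := by
    intro y hy
    have hy2 : ordAt y < Ordinal.lsub F := by rw [hlsub]; exact ordAt_lt_iff.2 hy
    obtain ⟨i, hi⟩ := Ordinal.lt_lsub_iff.1 hy2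
    exact ⟨i, by rw [← ordAt_le_iff, hu]; exact hi⟩
  set L : Set κ.ord.ToType :=
    {x | x < a ∧ (∃ i, u i < x) ∧ ∀ y, y < x → ∃ i, y < u i ∧ u i < x} with hL
  refine ⟨range u ∪ L, ⟨?_, ?_, ?_⟩, ?_⟩
  · rintro x (⟨i, rfl⟩ | hx)
    · exact hua i
    · exact hx.1
  · intro b hb
    obtain ⟨i, hi⟩ := hunb b hb
    exact ⟨u i, Or.inl (mem_range_self i), hi⟩
  · rintro x hx ⟨y, hy, hyx⟩ hlim
    right
    refine ⟨hx, ?_, ?_⟩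
    · rcases hy with ⟨i, rfl⟩ | hyL
      · exact ⟨i, hyx⟩
      · obtain ⟨i, hi⟩ := hyL.2.1
        exact ⟨i, lt_trans hi hyx⟩
    · intro y' hy'
      obtain ⟨z, hz, hy'z, hzx⟩ := hlim y' hy'
      rcases hz with ⟨i, rfl⟩ | hzL
      · exact ⟨i, hy'z, hzx⟩
      · obtain ⟨i, h1, h2⟩ := hzL.2.2 y' hy'z
        exact ⟨i, h1, lt_trans h2 hzx⟩
  · have hrange : #↥(range u) ≤ cofAt a := by
      refine le_trans (Cardinal.mk_range_le) ?_
      rw [hcard]; rfl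
    have hLle : #↥L ≤ cofAt a := by
      by_cases hne : L = ∅
      · simp [hne]
      · -- embed L into ι via least index above
        have hLne : ∀ x : ↥L, {o : Ordinal | (∃ i, ordAt (u i) = o) ∧ ordAt x.1 ≤ o}.Nonempty := by
          intro x
          obtain ⟨i, hi⟩ := hunb x.1 x.2.1
          exact ⟨ordAt (u i), ⟨i, rfl⟩, ordAt_le_iff.2 hi⟩
        set m : ↥L → Ordinal :=
          fun x => sInf {o : Ordinal | (∃ i, ordAt (u i) = o) ∧ ordAt x.1 ≤ o} with hm
        have hmmem : ∀ x, m x ∈ {o : Ordinal | (∃ i, ordAt (u i) = o) ∧ ordAt x.1 ≤ o} :=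
          fun x => csInf_mem (hLne x)
        have hmono : ∀ x y : ↥L, x.1 < y.1 → m x < m y := by
          intro x y hxy
          obtain ⟨i, h1, h2⟩ := y.2.2.2 x.1 hxy
          have hle : m x ≤ ordAt (u i) := csInf_le' ⟨⟨i, rfl⟩, ordAt_le_iff.2 h1.le⟩
          exact lt_of_le_of_lt hle (lt_of_lt_of_le (ordAt_lt_iff.2 h2) (hmmem y).2)
        choose ix hix using fun x : ↥L => (hmmem x).1
        have hinj : Function.Injective ix := by
          intro x y hxy
          rcases lt_trichotomy x.1 y.1 with h | h | h
          · exact absurd (hix x ▸ hix y ▸ congrArg (fun i => ordAt (u i)) hxy)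
              (ne_of_lt (hmono x y h))
          · exact Subtype.ext h
          · exact absurd (hix y ▸ hix x ▸ congrArg (fun i => ordAt (u i)) hxy.symm)
              (ne_of_lt (hmono y x h))
        refine le_trans (Cardinal.mk_le_of_injective hinj) ?_
        rw [hcard]; rfl
    by_cases hfin : ℵ₀ ≤ cofAt a
    · refine le_trans (Cardinal.mk_union_le _ _) ?_
      refine le_trans (add_le_add hrange hLle) ?_
      exact le_of_eq (Cardinal.add_eq_self hfin)
    · -- finitely many generators: no limit points
      push_neg at hfin
      have : Finite ι := by
        rw [← Cardinal.mk_lt_aleph0_iff]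
        rw [hcard]
        exact hfin
      have hLempty : L = ∅ := by
        rw [eq_empty_iff_forall_notMem]
        rintro x ⟨hxa, ⟨i₀, hi₀⟩, hxlim⟩
        have hfr : ((range u) ∩ Iio x).Finite := (Set.finite_range u).inter_of_left _
        have hfne : ((range u) ∩ Iio x).Nonempty := ⟨u i₀, mem_range_self i₀, hi₀⟩
        obtain ⟨mx, hmx, hmax⟩ := Set.Finite.exists_maximalFor id _ hfr hfne
        obtain ⟨i, h1, h2⟩ := hxlim mx hmx.2
        have : mx = u i := le_antisymm h1.le (hmax ⟨mem_range_self i, h2⟩ h1.le)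
        exact absurd h1 (this ▸ lt_irrefl _)
      rw [hLempty, union_empty]
      exact hrange

lemma avoid {θ : Ordinal} (E : θ.ToType → Set κ.ord.ToType)
    (hdisj : ∀ ν₁ ν₂ x, x ∈ E ν₁ → x ∈ E ν₂ → ν₁ = ν₂)
    (c : Set κ.ord.ToType) (hcard : #↥c < #θ.ToType) : ∃ ν, c ∩ E ν = ∅ := by
  by_contra h
  push_neg at h
  have h' : ∀ ν, ∃ x, x ∈ c ∩ E ν := by
    intro ν
    exact h ν
  choose w hw using h'
  have hinj : Function.Injective (fun ν => (⟨w ν, (hw ν).1⟩ : ↥c)) := by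
    intro ν₁ ν₂ hv
    have : w ν₁ = w ν₂ := congrArg Subtype.val hv
    exact hdisj ν₁ ν₂ (w ν₁) (hw ν₁).2 (this ▸ (hw ν₂).2)
  exact absurd (Cardinal.mk_le_of_injective hinj) (not_le.2 hcard)

end

/-- (Claim 1 of Theorem 6.) Let `κ` be regular uncountable, `I` a `κ`-complete
normal ideal over `κ`, and `δ` a cardinal with `δ⁺ < κ` such that
`{α < κ : cf(α) = δ} ∉ I`. Then there are a stationary `E ⊆ {α < κ : cf(α) = ℵ₀}`
and an `I`-positive `X ⊆ {α < κ : cf(α) = δ}` such that `E ∩ α` is non-stationary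
in `α` for every `α ∈ X`. -/
theorem stmt13 (κ δ : Cardinal) (hreg : κ.IsRegular) (hunc : ℵ₀ < κ)
    (hδ : Order.succ δ < κ)
    (I : Set (Set κ.ord.ToType))
    (hlower : ∀ Y ∈ I, ∀ Z : Set κ.ord.ToType, Z ⊆ Y → Z ∈ I)
    (hcomplete : ∀ S : Set (Set κ.ord.ToType), S ⊆ I → #S < κ → ⋃₀ S ∈ I)
    (hnormal : ∀ f : κ.ord.ToType → κ.ord.ToType, ∀ Y : Set κ.ord.ToType,
      Y ∉ I → (∀ a ∈ Y, f a < a) → ∃ b, {a ∈ Y | f a = b} ∉ I)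
    (hpos : {a : κ.ord.ToType | cofAt a = δ} ∉ I) :
    ∃ E X : Set κ.ord.ToType,
      E ⊆ {a | cofAt a = ℵ₀} ∧ OStat E ∧
      X ⊆ {a | cofAt a = δ} ∧ X ∉ I ∧
      ∀ a ∈ X, ∃ c, ClubBelow c a ∧ c ∩ E = ∅ := by
  classical
  set θ : Ordinal := (Order.succ δ).ord with hθdef
  have hθcard : θ.card = Order.succ δ := Cardinal.card_ord _
  have hθκ : θ.card < κ := by rw [hθcard]; exact hδ
  obtain ⟨E, hEstat, hEsub, hEdisj⟩ := solovay hreg hunc θ hθκ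
  have hθT : #θ.ToType = Order.succ δ := by rw [Cardinal.mk_toType, hθcard]
  set X : θ.ToType → Set κ.ord.ToType :=
    fun ν => {a | cofAt a = δ ∧ ∃ c, ClubBelow c a ∧ c ∩ E ν = ∅} with hX
  have hcover : {a : κ.ord.ToType | cofAt a = δ} ⊆ ⋃ ν, X ν := by
    intro a ha
    obtain ⟨c, hc1, hc2⟩ := clubBelow_small a
    have hlt : #↥c < #θ.ToType := by
      rw [hθT]
      exact lt_of_le_of_lt (ha ▸ hc2) (Order.lt_succ δ)
    obtain ⟨ν, hν⟩ := avoid E hEdisj c hlt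
    exact mem_iUnion.2 ⟨ν, ha, c, hc1, hν⟩
  have hex : ∃ ν, X ν ∉ I := by
    by_contra hall
    push_neg at hall
    have h1 : ⋃₀ (range X) ∈ I := by
      apply hcomplete
      · rintro Y ⟨ν, rfl⟩; exact hall ν
      · exact lt_of_le_of_lt Cardinal.mk_range_le (by rw [hθT]; exact hδ)
    rw [sUnion_range] at h1
    exact hpos (hlower _ h1 _ hcover)
  obtain ⟨ν₀, hν₀⟩ := hex
  exact ⟨E ν₀, X ν₀, hEsub ν₀, hEstat ν₀, fun a ha => ha.1, hν₀, fun a ha => ha.2⟩
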